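/- arXiv:2304.12131 — 2 statements merged into one kernel-verified Lean document; each statement's English description precedes it below -/
import Mathlib

section
/- The power set 2^[n], partially ordered by S ≤ T iff |S| ≥ |T| and S^i ≤ T^i for all i ≤ |T|, is a lattice, where for k = min(|S|,|T|) the join is S ∨ T = {max(S^i,T^i) : 1 ≤ i ≤ k} and the meet is S ∧ T = {min(S^i,T^i) : 1 ≤ i ≤ k} ∪ (the elements S^{k+1},…,S^{|S|} if |S| ≥ |T|, or T^{k+1},…,T^{|T|} otherwise). -/
/-- The i-th smallest element (0-indexed) of a finite set of naturals. -/
def nth (S : Finset ℕ) (i : ℕ) : ℕ := (S.sort (· ≤ ·)).getD i 0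

/-- The order on 2^[n]: S ≤ T iff |S| ≥ |T| and S^i ≤ T^i for i ≤ |T|. -/
def gale (S T : Finset ℕ) : Prop :=
  T.card ≤ S.card ∧ ∀ i < T.card, nth S i ≤ nth T i

/-- |w|_N : number of occurrences in w of letters from N. -/
def wcount (w : List ℕ) (N : Finset ℕ) : ℕ := (w.filter (· ∈ N)).length

/-- A strictly increasing chain from S to T inside the order interval [S,T]. -/
def isChain (S T : Finset ℕ) (P : List (Finset ℕ)) : Prop :=
  P.head? = some S ∧ P.getLast? = some T ∧
  P.Chain' (fun A B => gale A B ∧ A ≠ B) ∧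
  ∀ Q ∈ P, gale S Q ∧ gale Q T

/-- The join S ∨ T in 2^[n]. -/
def galeJoin (S T : Finset ℕ) : Finset ℕ :=
  (Finset.range (min S.card T.card)).image fun i => max (nth S i) (nth T i)

/-- The meet S ∧ T in 2^[n]. -/
def galeMeet (S T : Finset ℕ) : Finset ℕ :=
  ((Finset.range (min S.card T.card)).image fun i => min (nth S i) (nth T i)) ∪
    (if T.card ≤ S.card then (Finset.Ico T.card S.card).image (nth S)
     else (Finset.Ico S.card T.card).image (nth T))

lemma nth_mem {S : Finset ℕ} {i : ℕ} (h : i < S.card) : nth S i ∈ S := by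
  have hl : (S.sort (· ≤ ·)).length = S.card := Finset.length_sort _
  rw [nth, List.getD_eq_getElem _ _ (by omega)]
  exact (Finset.mem_sort _).1 (List.getElem_mem _)

lemma nth_lt_nth {S : Finset ℕ} {i j : ℕ} (hij : i < j) (hj : j < S.card) :
    nth S i < nth S j := by
  have hl : (S.sort (· ≤ ·)).length = S.card := Finset.length_sort _
  have hs := S.sortedLT_sort.pairwise
  rw [nth, nth, List.getD_eq_getElem _ _ (by omega), List.getD_eq_getElem _ _ (by omega)]
  rw [List.pairwise_iff_get] at hs
  exact hs ⟨i, by omega⟩ ⟨j, by omega⟩ hij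

lemma sort_image {m : ℕ} {g : ℕ → ℕ} (hg : ∀ i j, i < j → j < m → g i < g j) :
    ((Finset.range m).image g).sort (· ≤ ·) = (List.range m).map g := by
  have hinj : Set.InjOn g (Finset.range m) := by
    intro a ha b hb hab
    simp only [Finset.coe_range, Set.mem_Iio] at ha hb
    by_contra h
    rcases Nat.lt_or_ge a b with h' | h'
    · exact absurd hab (Nat.ne_of_lt (hg a b h' hb))
    · exact absurd hab.symm (Nat.ne_of_lt (hg b a (by omega) ha))
  refine (fun hp hs => List.Perm.eq_of_pairwise' (Finset.pairwise_sort _ _) hs hp) ?_ ?_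
  · rw [← Multiset.coe_eq_coe, Finset.sort_eq, Finset.image_val_of_injOn hinj]
    simp [Finset.range_val, Multiset.range]
  · rw [List.pairwise_iff_get]
    intro a b hab
    simp only [List.get_eq_getElem, List.getElem_map, List.getElem_range]
    have hb : (b : ℕ) < m := by have := b.2; simpa using this
    exact le_of_lt (hg _ _ hab hb)

lemma card_image {m : ℕ} {g : ℕ → ℕ} (hg : ∀ i j, i < j → j < m → g i < g j) :
    ((Finset.range m).image g).card = m := by
  rw [← Finset.length_sort (· ≤ ·), sort_image hg, List.length_map, List.length_range]

lemma nth_image {m : ℕ} {g : ℕ → ℕ} (hg : ∀ i j, i < j → j < m → g i < g j)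
    {i : ℕ} (h : i < m) : nth ((Finset.range m).image g) i = g i := by
  rw [nth, sort_image hg, List.getD_eq_getElem _ _ (by simpa using h)]
  simp

/-- The unified "meet function". -/
def mf (S T : Finset ℕ) (i : ℕ) : ℕ :=
  if i < min S.card T.card then min (nth S i) (nth T i)
  else if T.card ≤ S.card then nth S i else nth T i

lemma mf_mono (S T : Finset ℕ) :
    ∀ i j, i < j → j < max S.card T.card → mf S T i < mf S T j := by
  intro i j hij hj
  unfold mf
  split_ifs with h1 h2 h3 h4 h5 <;> try omega
  · exact lt_min ((min_le_left _ _).trans_lt (nth_lt_nth hij (by omega)))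
      ((min_le_right _ _).trans_lt (nth_lt_nth hij (by omega)))
  · exact (min_le_left _ _).trans_lt (nth_lt_nth hij (by omega))
  · exact (min_le_right _ _).trans_lt (nth_lt_nth hij (by omega))
  · exact nth_lt_nth hij (by omega)
  · exact nth_lt_nth hij (by omega)

lemma meet_eq (S T : Finset ℕ) :
    galeMeet S T = (Finset.range (max S.card T.card)).image (mf S T) := by
  rcases le_or_gt T.card S.card with h | h
  · have h1 : min S.card T.card = T.card := by omega
    have h2 : max S.card T.card = S.card := by omega
    have h3 : Finset.range S.card = Finset.range T.card ∪ Finset.Ico T.card S.card := by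
      rw [Finset.range_eq_Ico, Finset.range_eq_Ico]
      exact (Finset.Ico_union_Ico_eq_Ico (Nat.zero_le _) h).symm
    rw [galeMeet, if_pos h, h1, h2, h3, Finset.image_union]
    congr 1
    · apply Finset.image_congr
      intro x hx
      simp only [Finset.mem_coe, Finset.mem_range] at hx
      simp [mf, h1, hx]
    · apply (Finset.image_congr _).symm
      intro x hx
      simp only [Finset.mem_coe, Finset.mem_Ico] at hx
      simp [mf, h1, h, Nat.not_lt.2 hx.1]
  · have h1 : min S.card T.card = S.card := by omega
    have h2 : max S.card T.card = T.card := by omega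
    have h3 : Finset.range T.card = Finset.range S.card ∪ Finset.Ico S.card T.card := by
      rw [Finset.range_eq_Ico, Finset.range_eq_Ico]
      exact (Finset.Ico_union_Ico_eq_Ico (Nat.zero_le _) h.le).symm
    rw [galeMeet, if_neg (by omega), h1, h2, h3, Finset.image_union]
    congr 1
    · apply Finset.image_congr
      intro x hx
      simp only [Finset.mem_coe, Finset.mem_range] at hx
      simp [mf, h1, hx]
    · apply (Finset.image_congr _).symm
      intro x hx
      simp only [Finset.mem_coe, Finset.mem_Ico] at hx
      have h4 : ¬ T.card ≤ S.card := by omega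
      simp [mf, h1, Nat.not_lt.2 hx.1, h4]

lemma meet_card (S T : Finset ℕ) : (galeMeet S T).card = max S.card T.card := by
  rw [meet_eq]; exact card_image (mf_mono S T)

lemma meet_nth (S T : Finset ℕ) {i : ℕ} (h : i < max S.card T.card) :
    nth (galeMeet S T) i = mf S T i := by
  rw [meet_eq]; exact nth_image (mf_mono S T) h

lemma jf_mono (S T : Finset ℕ) :
    ∀ i j, i < j → j < min S.card T.card →
      max (nth S i) (nth T i) < max (nth S j) (nth T j) := by
  intro i j hij hj
  exact max_lt ((nth_lt_nth hij (by omega)).trans_le (le_max_left _ _))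
    ((nth_lt_nth hij (by omega)).trans_le (le_max_right _ _))

lemma join_card (S T : Finset ℕ) : (galeJoin S T).card = min S.card T.card :=
  card_image (jf_mono S T)

lemma join_nth (S T : Finset ℕ) {i : ℕ} (h : i < min S.card T.card) :
    nth (galeJoin S T) i = max (nth S i) (nth T i) :=
  nth_image (jf_mono S T) h

theorem stmt_4 (n : ℕ) (S T : Finset ℕ)
    (hS : S ⊆ Finset.Icc 1 n) (hT : T ⊆ Finset.Icc 1 n) :
    galeMeet S T ⊆ Finset.Icc 1 n ∧ galeJoin S T ⊆ Finset.Icc 1 n ∧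
    gale (galeMeet S T) S ∧ gale (galeMeet S T) T ∧
    (∀ P : Finset ℕ, P ⊆ Finset.Icc 1 n → gale P S → gale P T → gale P (galeMeet S T)) ∧
    gale S (galeJoin S T) ∧ gale T (galeJoin S T) ∧
    (∀ Q : Finset ℕ, Q ⊆ Finset.Icc 1 n → gale S Q → gale T Q → gale (galeJoin S T) Q) := by
  refine ⟨?_, ?_, ?_, ?_, ?_, ?_, ?_, ?_⟩
  · -- meet ⊆ Icc
    intro x hx
    rw [meet_eq] at hx
    simp only [Finset.mem_image, Finset.mem_range] at hx
    obtain ⟨i, hi, rfl⟩ := hx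
    unfold mf
    split_ifs with h1 h2
    · rcases min_cases (nth S i) (nth T i) with ⟨he, _⟩ | ⟨he, _⟩
      · rw [he]; exact hS (nth_mem (by omega))
      · rw [he]; exact hT (nth_mem (by omega))
    · exact hS (nth_mem (by omega))
    · exact hT (nth_mem (by omega))
  · -- join ⊆ Icc
    intro x hx
    simp only [galeJoin, Finset.mem_image, Finset.mem_range] at hx
    obtain ⟨i, hi, rfl⟩ := hx
    rcases max_cases (nth S i) (nth T i) with ⟨he, _⟩ | ⟨he, _⟩
    · rw [he]; exact hS (nth_mem (by omega))
    · rw [he]; exact hT (nth_mem (by omega))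
  · -- gale meet S
    refine ⟨by rw [meet_card]; omega, fun i hi => ?_⟩
    rw [meet_nth S T (by omega)]
    unfold mf
    split_ifs with h1 h2
    · exact min_le_left _ _
    · exact le_refl _
    · omega
  · -- gale meet T
    refine ⟨by rw [meet_card]; omega, fun i hi => ?_⟩
    rw [meet_nth S T (by omega)]
    unfold mf
    split_ifs with h1 h2
    · exact min_le_right _ _
    · omega
    · exact le_refl _
  · -- universal meet
    intro P _ hPS hPT
    obtain ⟨hc1, hf1⟩ := hPS
    obtain ⟨hc2, hf2⟩ := hPT
    refine ⟨by rw [meet_card]; omega, fun i hi => ?_⟩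
    rw [meet_card] at hi
    rw [meet_nth S T hi]
    unfold mf
    split_ifs with h1 h2
    · exact le_min (hf1 i (by omega)) (hf2 i (by omega))
    · exact hf1 i (by omega)
    · exact hf2 i (by omega)
  · -- gale S join
    refine ⟨by rw [join_card]; omega, fun i hi => ?_⟩
    rw [join_card] at hi
    rw [join_nth S T hi]
    exact le_max_left _ _
  · -- gale T join
    refine ⟨by rw [join_card]; omega, fun i hi => ?_⟩
    rw [join_card] at hi
    rw [join_nth S T hi]
    exact le_max_right _ _
  · -- universal join
    intro Q _ hSQ hTQ
    obtain ⟨hd1, hg1⟩ := hSQ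
    obtain ⟨hd2, hg2⟩ := hTQ
    refine ⟨by rw [join_card]; omega, fun i hi => ?_⟩
    rw [join_nth S T (by omega)]
    exact max_le (hg1 i hi) (hg2 i hi)
end

section
/- Let S, T ⊆ {1,…,n} with |S| = |T|, S ≤ T, and suppose s ∈ S ∖ T and t ∈ T ∖ S correspond to the same position in the sorted enumerations of S ∖ T and T ∖ S (so s < t). Let N = (S ∖ {s}) ∪ {t}. Then S ≤ N ≤ T, and the order interval [S, N] has chain length t − s + 1. -/
/-! ### Auxiliary theory: counting functions -/

/-- `cnt A x` is the number of elements of `A` that are `≤ x`. -/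
def cnt (A : Finset ℕ) (x : ℕ) : ℕ := (A.filter (· ≤ x)).card

lemma cnt_le_card (A : Finset ℕ) (x : ℕ) : cnt A x ≤ A.card :=
  Finset.card_filter_le _ _

lemma cnt_mono (A : Finset ℕ) {x y : ℕ} (h : x ≤ y) : cnt A x ≤ cnt A y := by
  apply Finset.card_le_card
  intro a ha
  rw [Finset.mem_filter] at ha ⊢
  exact ⟨ha.1, le_trans ha.2 h⟩

lemma cnt_zero (A : Finset ℕ) : cnt A 0 = if 0 ∈ A then 1 else 0 := by
  unfold cnt
  have h : A.filter (· ≤ 0) = A.filter (· = 0) := by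
    apply Finset.filter_congr; intro a _; simp [Nat.le_zero]
  rw [h, Finset.filter_eq']
  split <;> simp

lemma cnt_succ (A : Finset ℕ) (x : ℕ) :
    cnt A (x + 1) = cnt A x + if x + 1 ∈ A then 1 else 0 := by
  unfold cnt
  have h1 : A.filter (· ≤ x + 1) = A.filter (· ≤ x) ∪ A.filter (· = x + 1) := by
    rw [← Finset.filter_or]
    apply Finset.filter_congr; intro a _; simp [Nat.le_add_one_iff]
  have h2 : Disjoint (A.filter (· ≤ x)) (A.filter (· = x + 1)) := by
    rw [Finset.disjoint_left]
    intro a ha hb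
    have := (Finset.mem_filter.1 ha).2
    have := (Finset.mem_filter.1 hb).2
    omega
  rw [h1, Finset.card_union_of_disjoint h2, Finset.filter_eq']
  split <;> simp

lemma cnt_add_le (A : Finset ℕ) (x j : ℕ) : cnt A (x + j) ≤ cnt A x + j := by
  induction j with
  | zero => simp
  | succ m ih =>
    have := cnt_succ A (x + m)
    rw [show x + (m + 1) = (x + m) + 1 from rfl, this]
    split <;> omega

lemma eq_of_cnt_eq {A B : Finset ℕ} (h : ∀ x, cnt A x = cnt B x) : A = B := by
  ext a
  cases a with
  | zero =>
    have hA := cnt_zero A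
    have hB := cnt_zero B
    rw [h 0] at hA
    by_cases h1 : 0 ∈ A <;> by_cases h2 : 0 ∈ B <;>
      simp [h1, h2] at hA hB ⊢ <;> omega
  | succ b =>
    have hA := cnt_succ A b
    have hB := cnt_succ B b
    rw [h b, h (b + 1)] at hA
    by_cases h1 : b + 1 ∈ A <;> by_cases h2 : b + 1 ∈ B <;>
      simp [h1, h2] at hA hB ⊢ <;> omega

lemma cnt_insert {A : Finset ℕ} {a : ℕ} (ha : a ∉ A) (x : ℕ) :
    cnt (insert a A) x = cnt A x + if a ≤ x then 1 else 0 := by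
  unfold cnt
  rw [Finset.filter_insert]
  split
  · rw [Finset.card_insert_of_notMem (fun hc => ha (Finset.filter_subset _ _ hc))]
  · omega

lemma cnt_erase {A : Finset ℕ} {a : ℕ} (ha : a ∈ A) (x : ℕ) :
    cnt (A.erase a) x + (if a ≤ x then 1 else 0) = cnt A x := by
  conv_rhs => rw [← Finset.insert_erase ha]
  rw [cnt_insert (Finset.notMem_erase a A) x]

lemma cnt_inter_add_sdiff (A B : Finset ℕ) (x : ℕ) :
    cnt (A ∩ B) x + cnt (A \ B) x = cnt A x := by
  unfold cnt
  have hu : A ∩ B ∪ A \ B = A := by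
    ext a; simp only [Finset.mem_union, Finset.mem_inter, Finset.mem_sdiff]; tauto
  have hd : Disjoint ((A ∩ B).filter (· ≤ x)) ((A \ B).filter (· ≤ x)) := by
    rw [Finset.disjoint_left]
    intro a ha hb
    have h1 := (Finset.mem_filter.1 ha).1
    have h2 := (Finset.mem_filter.1 hb).1
    rw [Finset.mem_inter] at h1
    rw [Finset.mem_sdiff] at h2
    exact h2.2 h1.2
  rw [← Finset.card_union_of_disjoint hd, ← Finset.filter_union, hu]

/-- Summation of the counting function. -/
lemma sum_cnt (A : Finset ℕ) (M : ℕ) (hM : ∀ a ∈ A, a < M) :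
    (∑ x ∈ Finset.range M, cnt A x) + A.sum id = M * A.card := by
  have h1 : ∀ x, cnt A x = ∑ a ∈ A, if a ≤ x then 1 else 0 := by
    intro x; exact Finset.card_filter _ _
  calc (∑ x ∈ Finset.range M, cnt A x) + A.sum id
      = (∑ x ∈ Finset.range M, ∑ a ∈ A, if a ≤ x then 1 else 0) + A.sum id := by
        simp_rw [h1]
    _ = (∑ a ∈ A, ∑ x ∈ Finset.range M, if a ≤ x then 1 else 0) + A.sum id := by
        rw [Finset.sum_comm]
    _ = (∑ a ∈ A, (M - a)) + A.sum id := by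
        congr 1
        apply Finset.sum_congr rfl
        intro a _
        rw [← Finset.card_filter]
        have he : (Finset.range M).filter (fun x => a ≤ x) = Finset.Ico a M := by
          ext z
          simp only [Finset.mem_filter, Finset.mem_range, Finset.mem_Ico]
          omega
        rw [he, Nat.card_Ico]
    _ = ∑ a ∈ A, ((M - a) + a) := by rw [← Finset.sum_add_distrib]; rfl
    _ = ∑ a ∈ A, M := by
        apply Finset.sum_congr rfl
        intro a ha
        have := hM a ha; omega
    _ = M * A.card := by rw [Finset.sum_const, smul_eq_mul, mul_comm]

lemma sum_lt_sum_of_cnt {A B : Finset ℕ} (hcard : A.card = B.card)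
    (h : ∀ x, cnt B x ≤ cnt A x) (hne : A ≠ B) : A.sum id < B.sum id := by
  obtain ⟨x0, hx0⟩ : ∃ x, cnt B x < cnt A x := by
    by_contra hc
    push_neg at hc
    exact hne (eq_of_cnt_eq fun x => le_antisymm (hc x) (h x))
  set M := max (max (A.sup id) (B.sup id) + 1) (x0 + 1) with hM
  have hMA : ∀ a ∈ A, a < M := by
    intro a ha
    have := Finset.le_sup (f := id) ha
    simp only [id] at this; omega
  have hMB : ∀ a ∈ B, a < M := by
    intro a ha
    have := Finset.le_sup (f := id) ha
    simp only [id] at this; omega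
  have hsumA := sum_cnt A M hMA
  have hsumB := sum_cnt B M hMB
  have hlt : (∑ x ∈ Finset.range M, cnt B x) < ∑ x ∈ Finset.range M, cnt A x := by
    apply Finset.sum_lt_sum (fun x _ => h x)
    exact ⟨x0, Finset.mem_range.2 (by omega), hx0⟩
  rw [hcard] at hsumA
  omega

/-! ### nth vs cnt -/

lemma sorted_getD_le_iff (l : List ℕ) (hl : l.Pairwise (· ≤ ·)) :
    ∀ j x, j < l.length → (l.getD j 0 ≤ x ↔ j < (l.filter (· ≤ x)).length) := by
  induction l with
  | nil => intro j x hj; simp at hj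
  | cons a l ih =>
    rw [List.pairwise_cons] at hl
    obtain ⟨ha, hl⟩ := hl
    intro j x hj
    have hnil : ¬ a ≤ x → l.filter (· ≤ x) = [] := fun hax =>
      List.filter_eq_nil_iff.2 fun b hb => by
        simp only [decide_eq_true_eq]
        intro hbx
        exact hax (le_trans (ha b hb) hbx)
    cases j with
    | zero =>
      simp only [List.getD_cons_zero, List.filter_cons]
      by_cases hax : a ≤ x
      · rw [if_pos (by simpa using hax)]
        simp [hax]
      · rw [if_neg (by simpa using hax), hnil hax]
        exact iff_of_false hax (by simp)
    | succ j =>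
      have hj' : j < l.length := by simpa using hj
      simp only [List.getD_cons_succ, List.filter_cons]
      by_cases hax : a ≤ x
      · rw [if_pos (by simpa using hax), List.length_cons, ih hl j x hj']
        omega
      · rw [if_neg (by simpa using hax), hnil hax]
        refine iff_of_false ?_ (by simp)
        rw [ih hl j x hj', hnil hax]
        simp

lemma length_sort_filter (A : Finset ℕ) (x : ℕ) :
    ((A.sort (· ≤ ·)).filter (· ≤ x)).length = cnt A x := by
  have h1 : ((A.sort (· ≤ ·)).filter (· ≤ x)).length
      = (A.sort (· ≤ ·)).countP (fun a => decide (a ≤ x)) :=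
    List.countP_eq_length_filter.symm
  have h2 : Multiset.countP (· ≤ x) (↑(A.sort (· ≤ ·)) : Multiset ℕ)
      = (A.sort (· ≤ ·)).countP (fun a => decide (a ≤ x)) := Multiset.coe_countP _ _
  have h3 : (↑(A.sort (· ≤ ·)) : Multiset ℕ) = A.val := Finset.sort_eq _ _
  have h4 : cnt A x = Multiset.countP (· ≤ x) A.val := by
    unfold cnt
    rw [Multiset.countP_eq_card_filter]
    rfl
  rw [h1, ← h2, h3, h4]

lemma nth_le_iff {A : Finset ℕ} {j : ℕ} (hj : j < A.card) (x : ℕ) :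
    nth A j ≤ x ↔ j < cnt A x := by
  unfold nth
  rw [← length_sort_filter A x]
  exact sorted_getD_le_iff _ (Finset.pairwise_sort _ _) j x
    (by rw [Finset.length_sort]; exact hj)

lemma gale_iff_cnt {A B : Finset ℕ} (hcard : A.card = B.card) :
    gale A B ↔ ∀ x, cnt B x ≤ cnt A x := by
  constructor
  · rintro ⟨-, h⟩ x
    by_contra hc
    push_neg at hc
    have h1 : cnt A x < B.card := lt_of_lt_of_le hc (cnt_le_card B x)
    have h2 : nth B (cnt A x) ≤ x := (nth_le_iff h1 x).2 hc
    have h3 : nth A (cnt A x) ≤ x := le_trans (h _ h1) h2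
    have h4 : cnt A x < cnt A x := (nth_le_iff (by omega) x).1 h3
    omega
  · intro h
    refine ⟨hcard.ge, fun i hi => ?_⟩
    have h1 : i < cnt B (nth B i) := (nth_le_iff hi (nth B i)).1 le_rfl
    have h2 : i < cnt A (nth B i) := lt_of_lt_of_le h1 (h _)
    exact (nth_le_iff (hcard ▸ hi) (nth B i)).2 h2

lemma gale_refl (A : Finset ℕ) : gale A A := ⟨le_rfl, fun _ _ => le_rfl⟩

/-! ### Chains -/

lemma chain_len_le (N : Finset ℕ) : ∀ (P : List (Finset ℕ)) (A : Finset ℕ),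
    P.Chain' (fun X Y => gale X Y ∧ X ≠ Y) → (∀ Q ∈ P, Q.card = N.card) →
    P.head? = some A → P.getLast? = some N → A.sum id + (P.length - 1) ≤ N.sum id := by
  intro P
  induction P with
  | nil => intro A _ _ hh _; simp at hh
  | cons C rest ih =>
    intro A hchain hcards hh hl
    have hCA : C = A := by simpa using hh
    subst hCA
    cases rest with
    | nil =>
      have : C = N := by simpa using hl
      subst this; simp
    | cons D rest' =>
      simp only [List.Chain', List.isChain_cons_cons] at hchain
      obtain ⟨⟨hg, hne⟩, hchain'⟩ := hchain
      have hcC : C.card = N.card := hcards C (by simp)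
      have hcD : D.card = N.card := hcards D (by simp)
      have hlt : C.sum id < D.sum id :=
        sum_lt_sum_of_cnt (hcC.trans hcD.symm)
          ((gale_iff_cnt (hcC.trans hcD.symm)).1 hg) hne
      have hrec := ih D hchain' (fun Q hQ => hcards Q (by simp [hQ]))
        (by simp) (by rw [← hl]; exact (List.getLast?_cons_cons).symm)
      simp only [List.length_cons] at hrec ⊢
      omega

lemma exists_step {A N : Finset ℕ} (hcard : A.card = N.card)
    (h : ∀ x, cnt N x ≤ cnt A x) (hne : A ≠ N) :
    ∃ B : Finset ℕ, B.card = A.card ∧ B ≠ A ∧ (∀ x, cnt B x ≤ cnt A x) ∧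
      (∀ x, cnt N x ≤ cnt B x) ∧ B.sum id = A.sum id + 1 := by
  have hex : ∃ x, cnt N x < cnt A x := by
    by_contra hc
    push_neg at hc
    exact hne (eq_of_cnt_eq fun x => le_antisymm (hc x) (h x))
  classical
  set x0 := Nat.find hex with hx0def
  have hspec : cnt N x0 < cnt A x0 := Nat.find_spec hex
  have hx0A : x0 ∈ A := by
    rcases Nat.eq_zero_or_pos x0 with h0 | hpos
    · by_contra hmem
      rw [h0] at hspec hmem
      rw [cnt_zero A, if_neg hmem] at hspec
      omega
    · set y := x0 - 1 with hy
      have hyx : y + 1 = x0 := by omega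
      have hmin : ¬ (cnt N y < cnt A y) := Nat.find_min hex (by omega)
      have heq : cnt N y = cnt A y := le_antisymm (h y) (by omega)
      have hNm : cnt N y ≤ cnt N x0 := cnt_mono N (by omega)
      have hsucc := cnt_succ A y
      rw [hyx] at hsucc
      by_contra hmem
      rw [if_neg hmem] at hsucc
      omega
  -- the run of consecutive elements of A starting at x0
  have hex2 : ∃ k, x0 + k + 1 ∉ A := by
    refine ⟨A.sup id, fun hc => ?_⟩
    have := Finset.le_sup (f := id) hc
    simp only [id] at this
    omega
  set k := Nat.find hex2 with hkdef
  set a := x0 + k with hadef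
  have haA1 : a + 1 ∉ A := Nat.find_spec hex2
  have hrunmem : ∀ j, j ≤ k → x0 + j ∈ A := by
    intro j hj
    cases j with
    | zero => simpa using hx0A
    | succ m =>
      have h5 := Nat.find_min hex2 (show m < k by omega)
      rw [show x0 + (m + 1) = x0 + m + 1 from rfl]
      exact not_not.mp h5
  have hrun : ∀ j, j ≤ k → cnt A (x0 + j) = cnt A x0 + j := by
    intro j hj
    induction j with
    | zero => simp
    | succ m ihm =>
      have h1 := cnt_succ A (x0 + m)
      have h2 : x0 + m + 1 ∈ A := by
        have := hrunmem (m + 1) hj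
        rwa [show x0 + (m + 1) = x0 + m + 1 from rfl] at this
      rw [show x0 + (m + 1) = (x0 + m) + 1 from rfl, h1, if_pos h2, ihm (by omega)]
      omega
  have haA : a ∈ A := hrunmem k le_rfl
  have hcntAa : cnt A a = cnt A x0 + k := by rw [hadef]; exact hrun k le_rfl
  have hcntNa : cnt N a < cnt A a := by
    have h9 : cnt N a ≤ cnt N x0 + k := by rw [hadef]; exact cnt_add_le N x0 k
    omega
  refine ⟨insert (a + 1) (A.erase a), ?_, ?_, ?_, ?_, ?_⟩
  · rw [Finset.card_insert_of_notMem
      (fun hc => haA1 (Finset.mem_of_mem_erase hc)),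
      Finset.card_erase_of_mem haA]
    have : 1 ≤ A.card := Finset.card_pos.2 ⟨a, haA⟩
    omega
  · intro hBA
    have h5 : a ∈ insert (a + 1) (A.erase a) := by rw [hBA]; exact haA
    rw [Finset.mem_insert] at h5
    rcases h5 with h1 | h1
    · omega
    · exact absurd h1 (Finset.notMem_erase a A)
  · intro x
    have h1 := cnt_insert (A := A.erase a) (a := a + 1) (fun hc => haA1 (Finset.mem_of_mem_erase hc)) x
    have h2 := cnt_erase haA x
    split_ifs at h1 h2 <;> omega
  · intro x
    have h1 := cnt_insert (A := A.erase a) (a := a + 1) (fun hc => haA1 (Finset.mem_of_mem_erase hc)) x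
    have h2 := cnt_erase haA x
    by_cases hx : x = a
    · subst hx
      rw [if_pos le_rfl] at h2
      rw [if_neg (by omega)] at h1
      omega
    · have h3 := h x
      split_ifs at h1 h2 <;> omega
  · rw [Finset.sum_insert (fun hc => haA1 (Finset.mem_of_mem_erase hc))]
    have h1 := Finset.sum_erase_add A id haA
    simp only [id] at h1 ⊢
    omega

lemma exists_chain (N : Finset ℕ) : ∀ (d : ℕ) (A : Finset ℕ), A.card = N.card →
    (∀ x, cnt N x ≤ cnt A x) → A.sum id + d = N.sum id →
    ∃ P : List (Finset ℕ), isChain A N P ∧ P.length = d + 1 := by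
  intro d
  induction d with
  | zero =>
    intro A h1 h2 h3
    have hAN : A = N := by
      by_contra hne
      have := sum_lt_sum_of_cnt h1 h2 hne
      omega
    subst hAN
    refine ⟨[A], ⟨by simp, by simp, by simp [List.Chain'], ?_⟩, by simp⟩
    intro Q hQ
    simp only [List.mem_singleton] at hQ
    subst hQ
    exact ⟨gale_refl _, gale_refl _⟩
  | succ d ih =>
    intro A h1 h2 h3
    have hne : A ≠ N := by
      intro he
      rw [he] at h3
      omega
    obtain ⟨B, hBcard, hBne, hBle, hBge, hBsum⟩ := exists_step h1 h2 hne
    obtain ⟨P, hP, hlen⟩ := ih B (hBcard.trans h1) hBge (by omega)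
    obtain ⟨hhead, hlast, hchain, hmem⟩ := hP
    cases P with
    | nil => simp at hhead
    | cons C rest =>
      have hCB : C = B := by simpa using hhead
      subst hCB
      have hgAB : gale A C := (gale_iff_cnt hBcard.symm).2 hBle
      refine ⟨A :: C :: rest, ⟨by simp, ?_, ?_, ?_⟩, by simpa using hlen⟩
      · rw [List.getLast?_cons_cons]; exact hlast
      · simp only [List.Chain', List.isChain_cons_cons]
        exact ⟨⟨hgAB, hBne.symm⟩, hchain⟩
      · intro Q hQ
        rcases List.mem_cons.1 hQ with hQ1 | hQ1
        · subst hQ1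
          exact ⟨gale_refl _, (gale_iff_cnt h1).2 h2⟩
        · obtain ⟨hg1, hg2⟩ := hmem Q hQ1
          have hQcard : Q.card = C.card :=
            le_antisymm hg1.1 ((hBcard.trans h1).le.trans hg2.1)
          refine ⟨?_, hg2⟩
          refine (gale_iff_cnt (hBcard.symm.trans hQcard.symm)).2 fun x => ?_
          exact le_trans ((gale_iff_cnt hQcard.symm).1 hg1 x) (hBle x)

theorem stmt_10 (n : ℕ) (S T : Finset ℕ)
    (hS : S ⊆ Finset.Icc 1 n) (hT : T ⊆ Finset.Icc 1 n)
    (hcard : S.card = T.card) (hST : gale S T) (s t i : ℕ)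
    (hs : s ∈ S \ T) (ht : t ∈ T \ S) (hi : i < (S \ T).card)
    (his : nth (S \ T) i = s) (hit : nth (T \ S) i = t) :
    s < t ∧ gale S (S.erase s ∪ {t}) ∧ gale (S.erase s ∪ {t}) T ∧
    ((∃ P : List (Finset ℕ), isChain S (S.erase s ∪ {t}) P ∧ P.length = t - s + 1) ∧
      ∀ P : List (Finset ℕ), isChain S (S.erase s ∪ {t}) P → P.length ≤ t - s + 1) := by
  classical
  obtain ⟨hsS, hsT⟩ := Finset.mem_sdiff.1 hs
  obtain ⟨htT, htS⟩ := Finset.mem_sdiff.1 ht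
  set N := S.erase s ∪ {t} with hN
  have htSe : t ∉ S.erase s := fun h => htS (Finset.mem_of_mem_erase h)
  have hNins : N = insert t (S.erase s) := by
    rw [hN, Finset.union_comm]
    rfl
  have hsd : (S \ T).card = (T \ S).card := by
    have h1 := Finset.card_sdiff_add_card_inter S T
    have h2 := Finset.card_sdiff_add_card_inter T S
    rw [Finset.inter_comm] at h2
    omega
  have hi' : i < (T \ S).card := hsd ▸ hi
  have hcntT : ∀ x, cnt T x ≤ cnt S x := (gale_iff_cnt hcard).1 hST
  have hst : s < t := by
    by_contra hc
    push_neg at hc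
    have hne : t ≠ s := fun h => hsT (h ▸ htT)
    have htls : t < s := lt_of_le_of_ne hc hne
    have hA : i + 1 ≤ cnt (T \ S) t := (nth_le_iff hi' t).1 hit.le
    have hB : cnt (S \ T) t ≤ i := by
      by_contra hc2
      push_neg at hc2
      have := (nth_le_iff hi t).2 hc2
      rw [his] at this
      omega
    have d1 := cnt_inter_add_sdiff S T t
    have d2 := cnt_inter_add_sdiff T S t
    rw [Finset.inter_comm] at d2
    have := hcntT t
    omega
  have hstrict : ∀ x, s ≤ x → x < t → cnt T x + 1 ≤ cnt S x := by
    intro x hx1 hx2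
    have hA : i + 1 ≤ cnt (S \ T) x := (nth_le_iff hi x).1 (his.le.trans hx1)
    have hB : cnt (T \ S) x ≤ i := by
      by_contra hc2
      push_neg at hc2
      have := (nth_le_iff hi' x).2 hc2
      rw [hit] at this
      omega
    have d1 := cnt_inter_add_sdiff S T x
    have d2 := cnt_inter_add_sdiff T S x
    rw [Finset.inter_comm] at d2
    have := hcntT x
    omega
  have hcnt_N : ∀ x, cnt N x + (if s ≤ x then 1 else 0)
      = cnt S x + (if t ≤ x then 1 else 0) := by
    intro x
    rw [hNins, cnt_insert htSe x]
    have h2 := cnt_erase hsS x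
    omega
  have hcard_N : N.card = S.card := by
    rw [hNins, Finset.card_insert_of_notMem htSe, Finset.card_erase_of_mem hsS]
    have : 1 ≤ S.card := Finset.card_pos.2 ⟨s, hsS⟩
    omega
  have hcntNS : ∀ x, cnt N x ≤ cnt S x := by
    intro x
    have h1 := hcnt_N x
    split_ifs at h1 <;> omega
  have hcntTN : ∀ x, cnt T x ≤ cnt N x := by
    intro x
    have h1 := hcnt_N x
    have h2 := hcntT x
    split_ifs at h1 with hc1 hc2 <;>
      first
        | omega
        | (have h5 := hstrict x (by omega) (by omega); omega)
  have hgSN : gale S N := (gale_iff_cnt hcard_N.symm).2 hcntNS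
  have hgNT : gale N T := (gale_iff_cnt (hcard_N.trans hcard)).2 hcntTN
  have hsum : N.sum id + s = S.sum id + t := by
    rw [hNins, Finset.sum_insert htSe]
    have h1 := Finset.sum_erase_add S id hsS
    simp only [id] at h1 ⊢
    omega
  refine ⟨hst, hgSN, hgNT, ?_, ?_⟩
  · obtain ⟨P, hP, hPlen⟩ := exists_chain N (t - s) S hcard_N.symm hcntNS (by omega)
    exact ⟨P, hP, hPlen⟩
  · intro P hP
    obtain ⟨hh, hl, hc, hm⟩ := hP
    have hQcard : ∀ Q ∈ P, Q.card = N.card := by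
      intro Q hQ
      obtain ⟨hg1, hg2⟩ := hm Q hQ
      exact le_antisymm (hg1.1.trans hcard_N.ge) hg2.1
    have hlen := chain_len_le N P S hc hQcard hh hl
    have hPne : 1 ≤ P.length := by
      cases P with
      | nil => simp at hh
      | cons _ _ => simp
    omega
end
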